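/- arXiv:1805.10593 — 2 statements merged into one kernel-verified Lean document; each statement's English description precedes it below -/
import Mathlib

section
/- Let P₁, P₂, P₃ be affinely independent points in ℝ², let K be the triangle with these vertices, |K| its two-dimensional Lebesgue measure, e = [P₁, P₂] the edge of length |e| = dist(P₁, P₂), and h_K the diameter of K (the longest edge length). Let u : ℝ² → ℝ be continuously differentiable on a neighborhood of K. Then (|K|/|e|) ∫_e u² ds ≤ ∫_K u(x)² dx + h_K (∫_K u(x)² dx)^{1/2} (∫_K |∇u(x)|² dx)^{1/2}, where ∫_e u² ds denotes the line integral ∫₀¹ u(P₁ + t(P₂ − P₁))² |e| dt. -/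
open MeasureTheory
open scoped RealInnerProductSpace

noncomputable section TraceAux

open Set

namespace TraceAux

abbrev Eu := EuclideanSpace ℝ (Fin 2)

def ι2e : (ℝ × ℝ) ≃ᵐ Eu :=
  MeasurableEquiv.finTwoArrow.symm.trans (MeasurableEquiv.toLp 2 (Fin 2 → ℝ))

lemma ι2e_coord0 (p : ℝ × ℝ) : ι2e p 0 = p.1 := by
  simp [ι2e, MeasurableEquiv.coe_toLp, MeasurableEquiv.finTwoArrow]

lemma ι2e_coord1 (p : ℝ × ℝ) : ι2e p 1 = p.2 := by
  simp [ι2e, MeasurableEquiv.coe_toLp, MeasurableEquiv.finTwoArrow]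

lemma ι2e_mp : MeasurePreserving (⇑ι2e) volume volume := by
  have h1 : MeasurePreserving (⇑(MeasurableEquiv.finTwoArrow (α := ℝ)).symm) volume volume :=
    (volume_preserving_finTwoArrow ℝ).symm _
  have h2 : MeasurePreserving (⇑(MeasurableEquiv.toLp 2 (Fin 2 → ℝ))) volume volume :=
    (EuclideanSpace.volume_preserving_symm_measurableEquiv_toLp (Fin 2)).symm _
  exact h2.comp h1

def J : Set (ℝ × ℝ) := Ioo (0:ℝ) 1 ×ˢ Ioo (0:ℝ) 1

lemma J_meas : MeasurableSet J := measurableSet_Ioo.prod measurableSet_Ioo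

variable (P₁ P₂ P₃ : Eu)

def Phi (x : Eu) : Eu := P₃ + x 1 • (P₁ - P₃) + (x 1 * x 0) • (P₂ - P₁)

def Kt : Set Eu := convexHull ℝ {P₁, P₂, P₃}

def wvec (t : ℝ) : Eu := (P₁ - P₃) + t • (P₂ - P₁)

def gam (σ t : ℝ) : Eu := P₃ + σ • wvec P₁ P₂ P₃ t

def D0 : ℝ := (P₂ - P₁) 0 * (P₁ - P₃) 1 - (P₂ - P₁) 1 * (P₁ - P₃) 0

def DD : ℝ := |D0 P₁ P₂ P₃|

def SE : Set Eu := ⇑ι2e '' J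

def Phid (x : Eu) : Eu →L[ℝ] Eu :=
  (EuclideanSpace.proj (1 : Fin 2) : Eu →L[ℝ] ℝ).smulRight (P₁ - P₃) +
    (x 1 • (EuclideanSpace.proj (0 : Fin 2) : Eu →L[ℝ] ℝ)
      + x 0 • (EuclideanSpace.proj (1 : Fin 2) : Eu →L[ℝ] ℝ)).smulRight (P₂ - P₁)

lemma hasFDerivAt_Phi (x : Eu) : HasFDerivAt (Phi P₁ P₂ P₃) (Phid P₁ P₂ P₃ x) x := by
  have h0 : HasFDerivAt (fun y : Eu => y 0)
      (EuclideanSpace.proj (0 : Fin 2) : Eu →L[ℝ] ℝ) x :=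
    (EuclideanSpace.proj (0 : Fin 2) : Eu →L[ℝ] ℝ).hasFDerivAt
  have h1 : HasFDerivAt (fun y : Eu => y 1)
      (EuclideanSpace.proj (1 : Fin 2) : Eu →L[ℝ] ℝ) x :=
    (EuclideanSpace.proj (1 : Fin 2) : Eu →L[ℝ] ℝ).hasFDerivAt
  have hA := h1.smul (hasFDerivAt_const (P₁ - P₃) x)
  have hB := (h1.mul h0).smul (hasFDerivAt_const (P₂ - P₁) x)
  have hsum := ((hasFDerivAt_const P₃ x).add hA).add hB
  refine HasFDerivAt.congr_fderiv (f := Phi P₁ P₂ P₃) hsum ?_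
  ext v
  simp [Phid]

lemma det_Phid (x : Eu) : (Phid P₁ P₂ P₃ x).det = x 1 * D0 P₁ P₂ P₃ := by
  have h := LinearMap.det_toMatrix (PiLp.basisFun 2 ℝ (Fin 2))
    ((Phid P₁ P₂ P₃ x) : Eu →ₗ[ℝ] Eu)
  rw [ContinuousLinearMap.det, ← h, Matrix.det_fin_two]
  simp [LinearMap.toMatrix_apply, PiLp.basisFun_apply, PiLp.basisFun_repr, Phid, D0,
    PiLp.proj_apply, Pi.single_apply]
  ring

lemma mem_Kt (σ t : ℝ) (hσ : σ ∈ Icc (0:ℝ) 1) (ht : t ∈ Icc (0:ℝ) 1) :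
    gam P₁ P₂ P₃ σ t ∈ Kt P₁ P₂ P₃ := by
  have hK : Convex ℝ (Kt P₁ P₂ P₃) := convex_convexHull ℝ _
  have h1 : P₁ ∈ Kt P₁ P₂ P₃ := subset_convexHull ℝ _ (by simp)
  have h2 : P₂ ∈ Kt P₁ P₂ P₃ := subset_convexHull ℝ _ (by simp)
  have h3 : P₃ ∈ Kt P₁ P₂ P₃ := subset_convexHull ℝ _ (by simp)
  have hedge : (1 - t) • P₁ + t • P₂ ∈ Kt P₁ P₂ P₃ :=
    hK h1 h2 (a := 1 - t) (b := t) (by linarith [ht.2]) ht.1 (by ring)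
  have hpt := hK h3 hedge (a := 1 - σ) (b := σ) (by linarith [hσ.2]) hσ.1 (by ring)
  convert hpt using 1
  simp only [gam, wvec]
  module

lemma gam_one (t : ℝ) : gam P₁ P₂ P₃ 1 t = P₁ + t • (P₂ - P₁) := by
  simp only [gam, wvec]
  module

lemma Phi_ι (p : ℝ × ℝ) : Phi P₁ P₂ P₃ (ι2e p) = gam P₁ P₂ P₃ p.2 p.1 := by
  show P₃ + (ι2e p 1) • (P₁ - P₃) + ((ι2e p 1) * (ι2e p 0)) • (P₂ - P₁) = _
  rw [ι2e_coord0, ι2e_coord1]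
  simp only [gam, wvec]
  module

lemma seg_null (p q : Eu) : volume (convexHull ℝ ({p, q} : Set Eu)) = 0 := by
  refine measure_mono_null (convexHull_subset_affineSpan _)
    (Measure.addHaar_affineSubspace _ _ ?_)
  intro h
  have hd : vectorSpan ℝ ({p, q} : Set Eu) = ⊤ := by
    rw [← direction_affineSpan, h]
    exact AffineSubspace.direction_top ℝ _ _
  rw [vectorSpan_pair] at hd
  rcases eq_or_ne (p -ᵥ q) 0 with h0 | h0
  · rw [h0] at hd
    simp only [Submodule.span_zero_singleton] at hd
    exact absurd hd bot_ne_top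
  · have h1 := finrank_span_singleton (K := ℝ) h0
    rw [hd, finrank_top ℝ Eu] at h1
    rw [finrank_euclideanSpace_fin] at h1
    norm_num at h1

lemma image_subset_Kt : Phi P₁ P₂ P₃ '' SE ⊆ Kt P₁ P₂ P₃ := by
  rintro - ⟨-, ⟨p, hp, rfl⟩, rfl⟩
  rw [Phi_ι]
  exact mem_Kt _ _ _ _ _ (Ioo_subset_Icc_self hp.2) (Ioo_subset_Icc_self hp.1)

lemma Kt_diff_null : volume (Kt P₁ P₂ P₃ \ Phi P₁ P₂ P₃ '' SE) = 0 := by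
  have hsub : Kt P₁ P₂ P₃ \ Phi P₁ P₂ P₃ '' SE ⊆
      convexHull ℝ ({P₂, P₃} : Set Eu) ∪ convexHull ℝ ({P₁, P₃} : Set Eu)
        ∪ convexHull ℝ ({P₁, P₂} : Set Eu) := by
    rintro x ⟨hx, hnot⟩
    have hx' : x ∈ convexHull ℝ (insert P₁ ({P₂, P₃} : Set Eu)) := hx
    rw [convexHull_insert ⟨P₂, by simp⟩] at hx'
    obtain ⟨z1, hz1, z2, hz2, hseg⟩ := mem_convexJoin.1 hx'
    rw [Set.mem_singleton_iff] at hz1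
    rw [hz1] at hseg
    rw [convexHull_pair] at hz2
    obtain ⟨d₂, d₃, hd₂, hd₃, hds, rfl⟩ := hz2
    obtain ⟨c₁, c₂, hc₁, hc₂, hcs, hxeq⟩ := hseg
    set α := c₁ with hα_def
    set β := c₂ * d₂ with hβ_def
    set γ := c₂ * d₃ with hγ_def
    have hαn : 0 ≤ α := hc₁
    have hβn : 0 ≤ β := mul_nonneg hc₂ hd₂
    have hγn : 0 ≤ γ := mul_nonneg hc₂ hd₃
    have hsum : α + β + γ = 1 := by
      simp only [hα_def, hβ_def, hγ_def]
      nlinarith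
    have hxabc : x = α • P₁ + β • P₂ + γ • P₃ := by
      rw [← hxeq]
      simp only [hα_def, hβ_def, hγ_def]
      module
    by_cases hα0 : α = 0
    · left; left
      rw [convexHull_pair]
      exact ⟨β, γ, hβn, hγn, by linarith, by rw [hxabc, hα0]; module⟩
    by_cases hβ0 : β = 0
    · left; right
      rw [convexHull_pair]
      exact ⟨α, γ, hαn, hγn, by linarith, by rw [hxabc, hβ0]; module⟩
    by_cases hγ0 : γ = 0
    · right
      rw [convexHull_pair]
      exact ⟨α, β, hαn, hβn, by linarith, by rw [hxabc, hγ0]; module⟩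
    exfalso
    apply hnot
    have hαp : 0 < α := lt_of_le_of_ne hαn (Ne.symm hα0)
    have hβp : 0 < β := lt_of_le_of_ne hβn (Ne.symm hβ0)
    have hγp : 0 < γ := lt_of_le_of_ne hγn (Ne.symm hγ0)
    set σ := α + β with hσ_def
    have hσp : 0 < σ := by positivity
    refine ⟨ι2e (β / σ, σ), ⟨(β / σ, σ), ⟨?_, ?_⟩, rfl⟩, ?_⟩
    · constructor
      · exact div_pos hβp hσp
      · rw [div_lt_one hσp]; linarith
    · exact ⟨hσp, by linarith⟩
    · rw [Phi_ι]
      rw [hxabc]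
      show P₃ + σ • ((P₁ - P₃) + (β / σ) • (P₂ - P₁)) = _
      have hsmul : σ • ((β / σ) • (P₂ - P₁)) = β • (P₂ - P₁) := by
        rw [smul_smul, mul_div_cancel₀ _ (ne_of_gt hσp)]
      rw [smul_add, hsmul]
      have hγeq : γ = 1 - α - β := by linarith
      rw [hγeq, hσ_def]
      module
  refine measure_mono_null hsub ?_
  exact measure_union_null (measure_union_null (seg_null _ _) (seg_null _ _)) (seg_null _ _)

lemma SE_meas : MeasurableSet SE :=
  ι2e.measurableEmbedding.measurableSet_image' J_meas

lemma image_ae : Phi P₁ P₂ P₃ '' SE =ᵐ[volume] Kt P₁ P₂ P₃ := by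
  rw [MeasureTheory.ae_eq_set]
  constructor
  · rw [Set.diff_eq_empty.2 (image_subset_Kt P₁ P₂ P₃)]
    exact measure_empty
  · exact Kt_diff_null P₁ P₂ P₃

lemma injOn_Phi (hind : AffineIndependent ℝ ![P₁, P₂, P₃]) :
    Set.InjOn (Phi P₁ P₂ P₃) SE := by
  have hli : LinearIndependent ℝ ![P₁ - P₃, P₂ - P₃] := by
    rw [affineIndependent_iff_linearIndependent_vsub ℝ _ 2] at hind
    have hinj : Function.Injective (![⟨0, by decide⟩, ⟨1, by decide⟩] :
        Fin 2 → {x : Fin 3 // x ≠ 2}) := by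
      intro i j hij
      fin_cases i <;> fin_cases j <;> simp_all
    have h2 := hind.comp _ hinj
    convert h2 using 1
    funext i
    fin_cases i <;> simp [vsub_eq_sub]
    rfl
  rw [LinearIndependent.pair_iff] at hli
  rintro - ⟨p, hp, rfl⟩ - ⟨q, hq, rfl⟩ heq
  rw [Phi_ι, Phi_ι] at heq
  have h2 : p.2 • (P₁ - P₃) + (p.2 * p.1) • (P₂ - P₁)
      = q.2 • (P₁ - P₃) + (q.2 * q.1) • (P₂ - P₁) := by
    have h' : P₃ + p.2 • ((P₁ - P₃) + p.1 • (P₂ - P₁))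
        = P₃ + q.2 • ((P₁ - P₃) + q.1 • (P₂ - P₁)) := heq
    have := add_left_cancel h'
    calc p.2 • (P₁ - P₃) + (p.2 * p.1) • (P₂ - P₁)
        = p.2 • ((P₁ - P₃) + p.1 • (P₂ - P₁)) := by module
      _ = q.2 • ((P₁ - P₃) + q.1 • (P₂ - P₁)) := this
      _ = q.2 • (P₁ - P₃) + (q.2 * q.1) • (P₂ - P₁) := by module
  have h3 : ((p.2 - q.2) - (p.2 * p.1 - q.2 * q.1)) • (P₁ - P₃)
      + (p.2 * p.1 - q.2 * q.1) • (P₂ - P₃) = 0 := by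
    calc ((p.2 - q.2) - (p.2 * p.1 - q.2 * q.1)) • (P₁ - P₃)
        + (p.2 * p.1 - q.2 * q.1) • (P₂ - P₃)
        = (p.2 • (P₁ - P₃) + (p.2 * p.1) • (P₂ - P₁))
          - (q.2 • (P₁ - P₃) + (q.2 * q.1) • (P₂ - P₁)) := by module
      _ = 0 := by rw [h2, sub_self]
  obtain ⟨hs, ht⟩ := hli _ _ h3
  have h22 : p.2 = q.2 := by linarith [sub_eq_zero.1 (by linarith : p.2 - q.2 = 0)]
  have hmul : p.2 * p.1 = q.2 * q.1 := by linarith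
  have hp2 : (0:ℝ) < p.2 := hp.2.1
  have h11 : p.1 = q.1 := by
    rw [h22] at hmul
    exact mul_left_cancel₀ (by rw [← h22]; exact ne_of_gt hp2) hmul
  congr 1
  exact Prod.ext h11 h22

lemma cov (hind : AffineIndependent ℝ ![P₁, P₂, P₃]) (g : Eu → ℝ) :
    ∫ x in Kt P₁ P₂ P₃, g x
      = ∫ p in J, p.2 * DD P₁ P₂ P₃ * g (gam P₁ P₂ P₃ p.2 p.1) := by
  rw [← setIntegral_congr_set (image_ae P₁ P₂ P₃)]
  rw [integral_image_eq_integral_abs_det_fderiv_smul volume (SE_meas)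
    (fun x _ => (hasFDerivAt_Phi P₁ P₂ P₃ x).hasFDerivWithinAt)
    (injOn_Phi P₁ P₂ P₃ hind) g]
  rw [show SE = ⇑ι2e '' J from rfl,
    ι2e_mp.setIntegral_image_emb ι2e.measurableEmbedding]
  refine setIntegral_congr_fun J_meas fun p hp => ?_
  simp only [det_Phid, Phi_ι, ι2e_coord1, smul_eq_mul, DD]
  rw [abs_mul, abs_of_nonneg (le_of_lt hp.2.1)]

lemma integrableOn_J {f : ℝ × ℝ → ℝ}
    (hf : ContinuousOn f (Icc (0:ℝ) 1 ×ˢ Icc (0:ℝ) 1)) : IntegrableOn f J := by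
  refine (hf.integrableOn_compact (isCompact_Icc.prod isCompact_Icc)).mono_set ?_
  exact Set.prod_mono Ioo_subset_Icc_self Ioo_subset_Icc_self

lemma J_iter (f : ℝ × ℝ → ℝ) (hf : IntegrableOn f J) :
    ∫ p in J, f p = ∫ t in (0:ℝ)..1, ∫ σ in (0:ℝ)..1, f (t, σ) := by
  have hvol : (volume : Measure (ℝ × ℝ)) = (volume : Measure ℝ).prod volume :=
    MeasureTheory.Measure.volume_eq_prod ℝ ℝ
  rw [show (∫ p in J, f p) = ∫ p in J, f p ∂((volume : Measure ℝ).prod volume) by rw [← hvol]]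
  rw [J, setIntegral_prod f (by rwa [← hvol, ← J])]
  rw [intervalIntegral.integral_of_le zero_le_one, integral_Ioc_eq_integral_Ioo]
  congr 1
  funext t
  rw [intervalIntegral.integral_of_le zero_le_one, integral_Ioc_eq_integral_Ioo]

lemma gradient_contOn (u : Eu → ℝ) (U : Set Eu) (hU : IsOpen U)
    (hu : ContDiffOn ℝ 1 u U) : ContinuousOn (fun x => gradient u x) U := by
  have hfc := hu.continuousOn_fderiv_of_isOpen hU le_rfl
  exact (InnerProductSpace.toDual ℝ Eu).symm.continuous.comp_continuousOn hfc

lemma ftc_t (u : Eu → ℝ) (U : Set Eu) (hU : IsOpen U) (hKU : Kt P₁ P₂ P₃ ⊆ U)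
    (hu : ContDiffOn ℝ 1 u U) (t : ℝ) (ht : t ∈ Icc (0:ℝ) 1) :
    ∫ σ in (0:ℝ)..1, (DD P₁ P₂ P₃ / 2) * (2 * σ * u (gam P₁ P₂ P₃ σ t) ^ 2
      + σ ^ 2 * (2 * u (gam P₁ P₂ P₃ σ t)
        * ⟪gradient u (gam P₁ P₂ P₃ σ t), wvec P₁ P₂ P₃ t⟫))
    = (DD P₁ P₂ P₃ / 2) * u (P₁ + t • (P₂ - P₁)) ^ 2 := by
  rw [intervalIntegral.integral_const_mul]
  congr 1
  have hmem : ∀ σ ∈ Icc (0:ℝ) 1, gam P₁ P₂ P₃ σ t ∈ U := fun σ hσ =>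
    hKU (mem_Kt _ _ _ _ _ hσ ht)
  have hdiffU : ∀ x ∈ U, DifferentiableAt ℝ u x := fun x hx =>
    (hu.differentiableOn one_ne_zero).differentiableAt (hU.mem_nhds hx)
  have hder : ∀ σ ∈ uIcc (0:ℝ) 1,
      HasDerivAt (fun σ => σ ^ 2 * u (gam P₁ P₂ P₃ σ t) ^ 2)
      (2 * σ * u (gam P₁ P₂ P₃ σ t) ^ 2
        + σ ^ 2 * (2 * u (gam P₁ P₂ P₃ σ t)
          * ⟪gradient u (gam P₁ P₂ P₃ σ t), wvec P₁ P₂ P₃ t⟫)) σ := by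
    intro σ hσ
    rw [uIcc_of_le zero_le_one] at hσ
    have hx : gam P₁ P₂ P₃ σ t ∈ U := hmem σ hσ
    have hγ : HasDerivAt (fun σ : ℝ => gam P₁ P₂ P₃ σ t) (wvec P₁ P₂ P₃ t) σ := by
      have h := ((hasDerivAt_id σ).smul_const (wvec P₁ P₂ P₃ t)).const_add P₃
      simpa [gam] using h
    have hgrad := (hdiffU _ hx).hasGradientAt
    have hcomp : HasDerivAt (fun σ : ℝ => u (gam P₁ P₂ P₃ σ t))
        ⟪gradient u (gam P₁ P₂ P₃ σ t), wvec P₁ P₂ P₃ t⟫ σ := by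
      have h2 := hgrad.hasFDerivAt.comp_hasDerivAt σ hγ
      refine HasDerivAt.congr_deriv (f := fun σ : ℝ => u (gam P₁ P₂ P₃ σ t)) h2 ?_
      simp [InnerProductSpace.toDual_apply_apply]
    have h3 := (hasDerivAt_pow 2 σ).mul (hcomp.pow 2)
    refine HasDerivAt.congr_deriv (f := fun σ => σ ^ 2 * u (gam P₁ P₂ P₃ σ t) ^ 2) h3 ?_
    simp only [Pi.pow_apply]
    ring
  have hcγ : Continuous fun σ : ℝ => gam P₁ P₂ P₃ σ t := by
    simp only [gam]; fun_prop
  have hcu : ContinuousOn (fun σ : ℝ => u (gam P₁ P₂ P₃ σ t)) (Icc 0 1) :=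
    hu.continuousOn.comp hcγ.continuousOn hmem
  have hcg : ContinuousOn (fun σ : ℝ => gradient u (gam P₁ P₂ P₃ σ t)) (Icc 0 1) :=
    (gradient_contOn u U hU hu).comp hcγ.continuousOn hmem
  have hcontF : ContinuousOn (fun σ : ℝ => 2 * σ * u (gam P₁ P₂ P₃ σ t) ^ 2
      + σ ^ 2 * (2 * u (gam P₁ P₂ P₃ σ t)
        * ⟪gradient u (gam P₁ P₂ P₃ σ t), wvec P₁ P₂ P₃ t⟫)) (Icc 0 1) := by
    refine ContinuousOn.add ?_ ?_
    · exact (continuousOn_const.mul continuousOn_id).mul (hcu.pow 2)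
    · exact ((continuousOn_id.pow 2)).mul
        ((continuousOn_const.mul hcu).mul (hcg.inner continuousOn_const))
  have hint : IntervalIntegrable (fun σ : ℝ => 2 * σ * u (gam P₁ P₂ P₃ σ t) ^ 2
      + σ ^ 2 * (2 * u (gam P₁ P₂ P₃ σ t)
        * ⟪gradient u (gam P₁ P₂ P₃ σ t), wvec P₁ P₂ P₃ t⟫)) volume 0 1 := by
    apply ContinuousOn.intervalIntegrable
    rwa [uIcc_of_le zero_le_one]
  rw [intervalIntegral.integral_eq_sub_of_hasDerivAt hder hint]
  simp [gam_one]

end TraceAux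

end TraceAux


open TraceAux Set in
/-- Intermediate trace bound in the proof of Theorem 4.1: for the triangle `K` with
vertices `P₁, P₂, P₃`, edge `e = [P₁, P₂]` and diameter `h_K`, and `u` continuously
differentiable on a neighborhood of `K`,
`(|K|/|e|) ∫_e u² ds ≤ ∫_K u² + h_K (∫_K u²)^{1/2} (∫_K |∇u|²)^{1/2}`. -/
theorem intermediate_trace_bound
    (P₁ P₂ P₃ : EuclideanSpace ℝ (Fin 2))
    (hind : AffineIndependent ℝ ![P₁, P₂, P₃])
    (u : EuclideanSpace ℝ (Fin 2) → ℝ)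
    (U : Set (EuclideanSpace ℝ (Fin 2))) (hU : IsOpen U)
    (hKU : convexHull ℝ {P₁, P₂, P₃} ⊆ U)
    (hu : ContDiffOn ℝ 1 u U) :
    ((volume (convexHull ℝ {P₁, P₂, P₃})).toReal / dist P₁ P₂)
        * (∫ t in (0:ℝ)..1, u (P₁ + t • (P₂ - P₁)) ^ 2 * dist P₁ P₂)
      ≤ (∫ x in convexHull ℝ {P₁, P₂, P₃}, u x ^ 2)
        + Metric.diam (convexHull ℝ ({P₁, P₂, P₃} : Set (EuclideanSpace ℝ (Fin 2))))
          * Real.sqrt (∫ x in convexHull ℝ {P₁, P₂, P₃}, u x ^ 2)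
          * Real.sqrt (∫ x in convexHull ℝ {P₁, P₂, P₃}, ‖gradient u x‖ ^ 2) := by
  classical
  set K : Set Eu := convexHull ℝ {P₁, P₂, P₃} with hKdef
  have hKt : Kt P₁ P₂ P₃ = K := rfl
  set D : ℝ := DD P₁ P₂ P₃ with hDdef
  have hD0 : (0:ℝ) ≤ D := abs_nonneg _
  have hfin : ({P₁, P₂, P₃} : Set Eu).Finite :=
    ((Set.finite_singleton P₃).insert P₂).insert P₁
  have hKcomp : IsCompact K := hfin.isCompact_convexHull ℝ
  have hKmeas : MeasurableSet K := hKcomp.isClosed.measurableSet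
  have hgradU : ContinuousOn (fun x => gradient u x) U := gradient_contOn u U hU hu
  have hucK : ContinuousOn u K := hu.continuousOn.mono hKU
  have hgradK : ContinuousOn (fun x => gradient u x) K := hgradU.mono hKU
  -- continuity on the square
  have cγ2 : Continuous (fun p : ℝ × ℝ => gam P₁ P₂ P₃ p.2 p.1) := by
    simp only [gam, wvec]; fun_prop
  have hmapsU : ∀ p ∈ Icc (0:ℝ) 1 ×ˢ Icc (0:ℝ) 1,
      gam P₁ P₂ P₃ p.2 p.1 ∈ U := fun p hp => hKU (mem_Kt _ _ _ _ _ hp.2 hp.1)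
  have hcu2 : ContinuousOn (fun p : ℝ × ℝ => u (gam P₁ P₂ P₃ p.2 p.1))
      (Icc (0:ℝ) 1 ×ˢ Icc (0:ℝ) 1) := hu.continuousOn.comp cγ2.continuousOn hmapsU
  have hcg2 : ContinuousOn (fun p : ℝ × ℝ => gradient u (gam P₁ P₂ P₃ p.2 p.1))
      (Icc (0:ℝ) 1 ×ˢ Icc (0:ℝ) 1) := hgradU.comp cγ2.continuousOn hmapsU
  have hcw : Continuous (fun p : ℝ × ℝ => wvec P₁ P₂ P₃ p.1) := by
    simp only [wvec]; fun_prop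
  -- the three 2-d integrands
  set q1 : ℝ × ℝ → ℝ := fun p => p.2 * D * u (gam P₁ P₂ P₃ p.2 p.1) ^ 2 with hq1def
  set q2 : ℝ × ℝ → ℝ := fun p => D / 2 * p.2 ^ 2 * (2 * u (gam P₁ P₂ P₃ p.2 p.1)
    * ⟪gradient u (gam P₁ P₂ P₃ p.2 p.1), wvec P₁ P₂ P₃ p.1⟫) with hq2def
  set q3 : ℝ × ℝ → ℝ := fun p => Metric.diam K * (p.2 * D
    * (|u (gam P₁ P₂ P₃ p.2 p.1)| * ‖gradient u (gam P₁ P₂ P₃ p.2 p.1)‖)) with hq3def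
  have hq1int : IntegrableOn q1 J := integrableOn_J
    ((continuous_snd.continuousOn.mul continuousOn_const).mul (hcu2.pow 2))
  have hq2int : IntegrableOn q2 J := integrableOn_J
    ((continuousOn_const.mul ((continuous_snd.pow 2).continuousOn)).mul
      ((continuousOn_const.mul hcu2).mul (hcg2.inner hcw.continuousOn)))
  have hq3int : IntegrableOn q3 J := integrableOn_J
    (continuousOn_const.mul ((continuous_snd.continuousOn.mul continuousOn_const).mul
      (hcu2.abs.mul hcg2.norm)))
  have hGint : IntegrableOn (fun p => q1 p + q2 p) J := hq1int.add hq2int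
  -- change of variables
  have hcov1 := cov P₁ P₂ P₃ hind (fun x => u x ^ 2)
  have hcov2 := cov P₁ P₂ P₃ hind (fun x => |u x| * ‖gradient u x‖)
  have hcov3 := cov P₁ P₂ P₃ hind (fun _ => (1:ℝ))
  rw [hKt] at hcov1 hcov2 hcov3
  -- volume identity
  have hvolK : (volume K).toReal = D / 2 := by
    have h1 : ∫ x in K, (1:ℝ) = (volume K).toReal := by
      rw [setIntegral_const]; simp [Measure.real_def]
    have h2 : ∫ p in J, p.2 * D * (1:ℝ) = D / 2 := by
      rw [J_iter (fun p => p.2 * D * (1:ℝ)) (integrableOn_J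
        ((continuous_snd.continuousOn.mul continuousOn_const).mul continuousOn_const))]
      have hin : ∀ t : ℝ, (∫ σ in (0:ℝ)..1, σ * D * 1) = D / 2 := by
        intro t
        simp only [mul_one]
        rw [intervalIntegral.integral_mul_const, integral_id]
        ring
      calc (∫ t in (0:ℝ)..1, ∫ σ in (0:ℝ)..1, σ * D * 1)
          = ∫ t in (0:ℝ)..1, (D / 2 : ℝ) :=
            intervalIntegral.integral_congr (fun t _ => hin t)
        _ = D / 2 := by simp
    rw [← h1, hcov3, ← h2]
  set Ie : ℝ := ∫ t in (0:ℝ)..1, u (P₁ + t • (P₂ - P₁)) ^ 2 with hIedef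
  -- main identity
  have hA : D / 2 * Ie = (∫ x in K, u x ^ 2) + ∫ p in J, q2 p := by
    have hfint : IntegrableOn (fun p : ℝ × ℝ => (D / 2)
        * (2 * p.2 * u (gam P₁ P₂ P₃ p.2 p.1) ^ 2
          + p.2 ^ 2 * (2 * u (gam P₁ P₂ P₃ p.2 p.1)
            * ⟪gradient u (gam P₁ P₂ P₃ p.2 p.1), wvec P₁ P₂ P₃ p.1⟫))) J :=
      hGint.congr_fun (fun p _ => by simp only [hq1def, hq2def]; ring) J_meas
    calc D / 2 * Ie = ∫ t in (0:ℝ)..1, D / 2 * u (P₁ + t • (P₂ - P₁)) ^ 2 :=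
          (intervalIntegral.integral_const_mul _ _).symm
      _ = ∫ t in (0:ℝ)..1, ∫ σ in (0:ℝ)..1, (D / 2)
            * (2 * σ * u (gam P₁ P₂ P₃ σ t) ^ 2
              + σ ^ 2 * (2 * u (gam P₁ P₂ P₃ σ t)
                * ⟪gradient u (gam P₁ P₂ P₃ σ t), wvec P₁ P₂ P₃ t⟫)) := by
          refine intervalIntegral.integral_congr fun t ht => ?_
          rw [uIcc_of_le zero_le_one] at ht
          exact (ftc_t P₁ P₂ P₃ u U hU (by rw [hKt]; exact hKU) hu t ht).symm
      _ = ∫ p in J, (D / 2) * (2 * p.2 * u (gam P₁ P₂ P₃ p.2 p.1) ^ 2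
            + p.2 ^ 2 * (2 * u (gam P₁ P₂ P₃ p.2 p.1)
              * ⟪gradient u (gam P₁ P₂ P₃ p.2 p.1), wvec P₁ P₂ P₃ p.1⟫)) :=
          (J_iter _ hfint).symm
      _ = ∫ p in J, (q1 p + q2 p) :=
          setIntegral_congr_fun J_meas fun p _ => by simp only [hq1def, hq2def]; ring
      _ = (∫ p in J, q1 p) + ∫ p in J, q2 p := integral_add hq1int hq2int
      _ = (∫ x in K, u x ^ 2) + ∫ p in J, q2 p := by rw [hcov1]
  -- bound on the error term
  have hP₃K : P₃ ∈ K := subset_convexHull ℝ _ (by simp)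
  have hwb : ∀ t ∈ Icc (0:ℝ) 1, ‖wvec P₁ P₂ P₃ t‖ ≤ Metric.diam K := by
    intro t ht
    have h1 : gam P₁ P₂ P₃ 1 t ∈ K := mem_Kt _ _ _ 1 t ⟨zero_le_one, le_refl 1⟩ ht
    have h2 : ‖wvec P₁ P₂ P₃ t‖ = dist (gam P₁ P₂ P₃ 1 t) P₃ := by
      rw [dist_eq_norm]
      congr 1
      simp [gam]
    rw [h2]
    exact Metric.dist_le_diam_of_mem hKcomp.isBounded h1 hP₃K
  have hq2le : ∀ p ∈ J, q2 p ≤ q3 p := by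
    intro p hp
    have hp1 : p.1 ∈ Ioo (0:ℝ) 1 := hp.1
    have hp2 : p.2 ∈ Ioo (0:ℝ) 1 := hp.2
    set x := gam P₁ P₂ P₃ p.2 p.1
    have hinn : |⟪gradient u x, wvec P₁ P₂ P₃ p.1⟫| ≤ ‖gradient u x‖ * ‖wvec P₁ P₂ P₃ p.1‖ :=
      abs_real_inner_le_norm _ _
    have hwt := hwb p.1 (Ioo_subset_Icc_self hp1)
    have key : u x * ⟪gradient u x, wvec P₁ P₂ P₃ p.1⟫
        ≤ |u x| * (‖gradient u x‖ * Metric.diam K) := by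
      calc u x * ⟪gradient u x, wvec P₁ P₂ P₃ p.1⟫
          ≤ |u x * ⟪gradient u x, wvec P₁ P₂ P₃ p.1⟫| := le_abs_self _
        _ = |u x| * |⟪gradient u x, wvec P₁ P₂ P₃ p.1⟫| := abs_mul _ _
        _ ≤ |u x| * (‖gradient u x‖ * ‖wvec P₁ P₂ P₃ p.1‖) :=
            mul_le_mul_of_nonneg_left hinn (abs_nonneg _)
        _ ≤ |u x| * (‖gradient u x‖ * Metric.diam K) :=
            mul_le_mul_of_nonneg_left
              (mul_le_mul_of_nonneg_left hwt (norm_nonneg _)) (abs_nonneg _)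
    have hp2a : (0:ℝ) < p.2 := hp2.1
    have hp2b : p.2 ≤ 1 := le_of_lt hp2.2
    have e1 : D * p.2 ^ 2 * (u x * ⟪gradient u x, wvec P₁ P₂ P₃ p.1⟫)
        ≤ D * p.2 ^ 2 * (|u x| * (‖gradient u x‖ * Metric.diam K)) :=
      mul_le_mul_of_nonneg_left key (by positivity)
    have e3 : D * p.2 ^ 2 * (|u x| * (‖gradient u x‖ * Metric.diam K))
        ≤ D * p.2 * (|u x| * (‖gradient u x‖ * Metric.diam K)) := by
      refine mul_le_mul_of_nonneg_right ?_
        (mul_nonneg (abs_nonneg _) (mul_nonneg (norm_nonneg _) Metric.diam_nonneg))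
      have h5 : D * p.2 * p.2 ≤ D * p.2 * 1 :=
        mul_le_mul_of_nonneg_left hp2b (mul_nonneg hD0 hp2a.le)
      nlinarith [h5]
    calc q2 p = D * p.2 ^ 2 * (u x * ⟪gradient u x, wvec P₁ P₂ P₃ p.1⟫) := by
          simp only [hq2def]; ring
      _ ≤ D * p.2 ^ 2 * (|u x| * (‖gradient u x‖ * Metric.diam K)) := e1
      _ ≤ D * p.2 * (|u x| * (‖gradient u x‖ * Metric.diam K)) := e3
      _ = q3 p := by simp only [hq3def]; ring
  have hmono : ∫ p in J, q2 p ≤ ∫ p in J, q3 p :=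
    setIntegral_mono_on hq2int hq3int J_meas hq2le
  have hq3eq : ∫ p in J, q3 p
      = Metric.diam K * ∫ x in K, |u x| * ‖gradient u x‖ := by
    calc ∫ p in J, q3 p
        = Metric.diam K * ∫ p in J, p.2 * D
            * (|u (gam P₁ P₂ P₃ p.2 p.1)| * ‖gradient u (gam P₁ P₂ P₃ p.2 p.1)‖) :=
          integral_const_mul _ _
      _ = Metric.diam K * ∫ x in K, |u x| * ‖gradient u x‖ := by rw [hcov2]
  -- Hölder / Cauchy-Schwarz
  haveI hfinK : IsFiniteMeasure (volume.restrict K) :=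
    ⟨by rw [Measure.restrict_apply_univ]; exact hKcomp.measure_lt_top⟩
  have hmu : AEStronglyMeasurable u (volume.restrict K) :=
    hucK.aestronglyMeasurable hKmeas
  have hmg : AEStronglyMeasurable (fun x => gradient u x) (volume.restrict K) :=
    hgradK.aestronglyMeasurable hKmeas
  obtain ⟨C1, hC1⟩ := hKcomp.exists_bound_of_continuousOn hucK
  obtain ⟨C2, hC2⟩ := hKcomp.exists_bound_of_continuousOn hgradK
  have hmua : AEStronglyMeasurable (fun x => |u x|) (volume.restrict K) := by
    simpa [Real.norm_eq_abs] using hmu.norm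
  have hm1 : MemLp (fun x => |u x|) (ENNReal.ofReal 2) (volume.restrict K) := by
    refine MemLp.of_bound hmua C1 ?_
    rw [ae_restrict_iff' hKmeas]
    exact ae_of_all _ fun x hx => by
      simpa [Real.norm_eq_abs, abs_abs] using hC1 x hx
  have hm2 : MemLp (fun x => ‖gradient u x‖) (ENNReal.ofReal 2) (volume.restrict K) := by
    refine MemLp.of_bound hmg.norm C2 ?_
    rw [ae_restrict_iff' hKmeas]
    exact ae_of_all _ fun x hx => by
      simpa [Real.norm_eq_abs, abs_abs] using hC2 x hx
  have hconj : (2:ℝ).HolderConjugate 2 := Real.HolderConjugate.two_two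
  have hholder := integral_mul_le_Lp_mul_Lq_of_nonneg hconj
    (ae_of_all _ fun x => abs_nonneg (u x))
    (ae_of_all _ fun x => norm_nonneg (gradient u x)) hm1 hm2
  have hsq1 : ∫ x in K, |u x| ^ (2:ℝ) = ∫ x in K, u x ^ 2 := by
    refine integral_congr_ae (ae_of_all _ fun x => ?_)
    show |u x| ^ (2:ℝ) = u x ^ 2
    rw [show (2:ℝ) = ((2:ℕ):ℝ) by norm_num, Real.rpow_natCast, sq_abs]
  have hsq2 : ∫ x in K, ‖gradient u x‖ ^ (2:ℝ) = ∫ x in K, ‖gradient u x‖ ^ 2 := by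
    refine integral_congr_ae (ae_of_all _ fun x => ?_)
    show ‖gradient u x‖ ^ (2:ℝ) = ‖gradient u x‖ ^ 2
    rw [show (2:ℝ) = ((2:ℕ):ℝ) by norm_num, Real.rpow_natCast]
  have hB : ∫ x in K, |u x| * ‖gradient u x‖
      ≤ Real.sqrt (∫ x in K, u x ^ 2) * Real.sqrt (∫ x in K, ‖gradient u x‖ ^ 2) := by
    rw [hsq1, hsq2] at hholder
    rw [Real.sqrt_eq_rpow, Real.sqrt_eq_rpow]
    exact hholder
  have hfinal : ∫ p in J, q2 p
      ≤ Metric.diam K * (Real.sqrt (∫ x in K, u x ^ 2)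
          * Real.sqrt (∫ x in K, ‖gradient u x‖ ^ 2)) := by
    calc ∫ p in J, q2 p ≤ ∫ p in J, q3 p := hmono
      _ = Metric.diam K * ∫ x in K, |u x| * ‖gradient u x‖ := hq3eq
      _ ≤ _ := mul_le_mul_of_nonneg_left hB Metric.diam_nonneg
  -- conclusion
  have hne : P₁ ≠ P₂ := by
    intro h
    have h01 : (![P₁, P₂, P₃] : Fin 3 → Eu) 0 = ![P₁, P₂, P₃] 1 := by simpa using h
    have := hind.injective h01
    exact absurd this (by decide)
  have hdpos : 0 < dist P₁ P₂ := dist_pos.2 hne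
  rw [intervalIntegral.integral_mul_const, hvolK]
  have hlhs : D / 2 / dist P₁ P₂ * (Ie * dist P₁ P₂) = D / 2 * Ie := by
    field_simp
  rw [hlhs, mul_assoc]
  calc D / 2 * Ie = (∫ x in K, u x ^ 2) + ∫ p in J, q2 p := hA
    _ ≤ (∫ x in K, u x ^ 2) + Metric.diam K * (Real.sqrt (∫ x in K, u x ^ 2)
          * Real.sqrt (∫ x in K, ‖gradient u x‖ ^ 2)) := by linarith
end

section
/- Let P₁, P₂, P₃ be affinely independent points in ℝ², let K be the triangle with these vertices, |K| its two-dimensional Lebesgue measure, e = [P₁, P₂] the edge of length |e| = dist(P₁, P₂), and h_K the diameter of K. Let u : ℝ² → ℝ be continuously differentiable on a neighborhood of K, assume the mean-zero condition on the edge ∫_e u ds = 0, and assume there exist a constant c ∈ ℝ and γ ≥ 0 such that (∫_K (u(x) − c)² dx)^{1/2} ≤ γ (∫_K |∇u(x)|² dx)^{1/2}. Then ∫_e u² ds ≤ (|e|/|K|) (γ² + h_K γ) ∫_K |∇u(x)|² dx. Here ∫_e g ds denotes the line integral ∫₀¹ g(P₁ + t(P₂ − P₁)) |e| dt. -/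
open MeasureTheory
open scoped RealInnerProductSpace

open Set

noncomputable section
abbrev E2 := EuclideanSpace ℝ (Fin 2)

variable {P₁ P₂ P₃ : E2}

def Tmap (P₁ P₂ P₃ : E2) (w : E2) : E2 :=
  P₃ + (w 1) • (P₁ - P₃) + (w 1 * w 0) • (P₂ - P₁)

def Sq : Set E2 := {w | w 0 ∈ Ioo (0:ℝ) 1 ∧ w 1 ∈ Ioo (0:ℝ) 1}

lemma Tmap_eq_combo (w : E2) :
    Tmap P₁ P₂ P₃ w = (w 1 - w 1 * w 0) • P₁ + (w 1 * w 0) • P₂ + (1 - w 1) • P₃ := by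
  simp only [Tmap, smul_sub, sub_smul, one_smul]
  abel

def triBasis (hind : AffineIndependent ℝ ![P₁, P₂, P₃]) : AffineBasis (Fin 3) ℝ E2 :=
  ⟨![P₁, P₂, P₃], hind, by
    rw [hind.affineSpan_eq_top_iff_card_eq_finrank_add_one]
    simp [finrank_euclideanSpace]⟩

lemma interior_tri (hind : AffineIndependent ℝ ![P₁, P₂, P₃]) :
    interior (convexHull ℝ {P₁, P₂, P₃}) = {x | ∀ i, 0 < (triBasis hind).coord i x} := by
  have : Set.range ![P₁, P₂, P₃] = {P₁, P₂, P₃} := by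
    ext x; simp [Fin.exists_fin_succ, Matrix.cons_val_zero, Matrix.cons_val_one]; tauto
  rw [← this, ← AffineBasis.interior_convexHull (triBasis hind)]
  rfl

lemma coord_combo (hind : AffineIndependent ℝ ![P₁, P₂, P₃]) (W : Fin 3 → ℝ)
    (hW : ∑ i, W i = 1) (i : Fin 3) :
    (triBasis hind).coord i (W 0 • P₁ + W 1 • P₂ + W 2 • P₃) = W i := by
  have h1 : Finset.univ.affineCombination ℝ (triBasis hind) W
      = W 0 • P₁ + W 1 • P₂ + W 2 • P₃ := by
    rw [Finset.univ.affineCombination_eq_linear_combination _ _ hW]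
    show ∑ j, W j • (![P₁, P₂, P₃]) j = _
    simp [Fin.sum_univ_three]
  rw [← h1]
  exact (triBasis hind).coord_apply_combination_of_mem (Finset.mem_univ i) hW

lemma coord_Tmap (hind : AffineIndependent ℝ ![P₁, P₂, P₃]) (w : E2) :
    ((triBasis hind).coord 0 (Tmap P₁ P₂ P₃ w) = w 1 - w 1 * w 0)
    ∧ ((triBasis hind).coord 1 (Tmap P₁ P₂ P₃ w) = w 1 * w 0)
    ∧ ((triBasis hind).coord 2 (Tmap P₁ P₂ P₃ w) = 1 - w 1) := by
  have hW : ∑ i, (![w 1 - w 1 * w 0, w 1 * w 0, 1 - w 1]) i = 1 := by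
    simp only [Matrix.cons_val_zero, Matrix.cons_val_one, Matrix.head_cons,
      Matrix.cons_val_two, Matrix.tail_cons, Fin.sum_univ_three]; ring
  have h0 := coord_combo hind _ hW 0
  have h1 := coord_combo hind _ hW 1
  have h2 := coord_combo hind _ hW 2
  simp only [Matrix.cons_val_zero, Matrix.cons_val_one, Matrix.head_cons,
    Matrix.cons_val_two, Matrix.tail_cons] at h0 h1 h2
  rw [← Tmap_eq_combo] at h0 h1 h2
  exact ⟨h0, h1, h2⟩

lemma image_Tmap (hind : AffineIndependent ℝ ![P₁, P₂, P₃]) :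
    Tmap P₁ P₂ P₃ '' Sq = interior (convexHull ℝ {P₁, P₂, P₃}) := by
  rw [interior_tri hind]
  ext x
  constructor
  · rintro ⟨w, ⟨⟨h00, h01⟩, h10, h11⟩, rfl⟩
    obtain ⟨c0, c1, c2⟩ := coord_Tmap hind (P₁ := P₁) (P₂ := P₂) (P₃ := P₃) w
    intro i
    fin_cases i
    · exact lt_of_lt_of_eq (by nlinarith) c0.symm
    · exact lt_of_lt_of_eq (by positivity) c1.symm
    · exact lt_of_lt_of_eq (by linarith) c2.symm
  · intro hx
    have hsum := (triBasis hind).sum_coord_apply_eq_one x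
    rw [Fin.sum_univ_three] at hsum
    set c0 := (triBasis hind).coord 0 x with hc0
    set c1 := (triBasis hind).coord 1 x with hc1
    set c2 := (triBasis hind).coord 2 x with hc2
    have h0 := hx 0; have h1 := hx 1; have h2 := hx 2
    rw [← hc0] at h0; rw [← hc1] at h1; rw [← hc2] at h2
    have hs : 0 < c0 + c1 := by linarith
    refine ⟨WithLp.toLp 2 (![c1 / (c0 + c1), c0 + c1] : Fin 2 → ℝ), ?_, ?_⟩
    · constructor
      · constructor
        · show (0:ℝ) < c1 / (c0 + c1); positivity
        · show c1 / (c0 + c1) < 1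
          rw [div_lt_one hs]; linarith
      · constructor
        · exact hs
        · show c0 + c1 < 1; linarith
    · have hx' := (triBasis hind).linear_combination_coord_eq_self x
      rw [Fin.sum_univ_three] at hx'
      rw [Tmap_eq_combo]
      show ((c0 + c1) - (c0 + c1) * (c1 / (c0 + c1))) • P₁
          + ((c0 + c1) * (c1 / (c0 + c1))) • P₂ + (1 - (c0 + c1)) • P₃ = x
      have he : (c0 + c1) * (c1 / (c0 + c1)) = c1 := by
        field_simp
      rw [he]
      have : (c0 + c1) - c1 = c0 := by ring
      rw [this]
      have : 1 - (c0 + c1) = c2 := by linarith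
      rw [this]
      rw [← hx']
      show _ = c0 • (![P₁,P₂,P₃]) 0 + c1 • (![P₁,P₂,P₃]) 1 + c2 • (![P₁,P₂,P₃]) 2
      simp

lemma injOn_Tmap (hind : AffineIndependent ℝ ![P₁, P₂, P₃]) :
    Set.InjOn (Tmap P₁ P₂ P₃) Sq := by
  rintro w ⟨hw0, hw1⟩ w' ⟨hw0', hw1'⟩ heq
  obtain ⟨a0, a1, a2⟩ := coord_Tmap hind (P₁ := P₁) (P₂ := P₂) (P₃ := P₃) w
  obtain ⟨b0, b1, b2⟩ := coord_Tmap hind (P₁ := P₁) (P₂ := P₂) (P₃ := P₃) w'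
  rw [heq] at a0 a1 a2
  have h1 : w 1 = w' 1 := by
    have := a2.symm.trans b2; linarith
  have h0 : w 0 = w' 0 := by
    have := a1.symm.trans b1
    rw [h1] at this
    have hpos : (0:ℝ) < w' 1 := hw1'.1
    exact mul_left_cancel₀ (ne_of_gt hpos) this
  refine PiLp.ext fun i => ?_
  fin_cases i
  · exact h0
  · exact h1

def Lmap (P₁ P₂ P₃ : E2) (w : E2) : E2 →L[ℝ] E2 :=
  (EuclideanSpace.proj (1 : Fin 2) : E2 →L[ℝ] ℝ).smulRight (P₁ - P₃) +
  ((w 1 : ℝ) • (EuclideanSpace.proj (0 : Fin 2) : E2 →L[ℝ] ℝ)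
    + (w 0 : ℝ) • (EuclideanSpace.proj (1 : Fin 2) : E2 →L[ℝ] ℝ)).smulRight (P₂ - P₁)

lemma hasFDerivAt_Tmap (w : E2) :
    HasFDerivAt (Tmap P₁ P₂ P₃) (Lmap P₁ P₂ P₃ w) w := by
  have h1 : HasFDerivAt (fun w : E2 => w 1)
      (EuclideanSpace.proj (1 : Fin 2) : E2 →L[ℝ] ℝ) w :=
    (EuclideanSpace.proj (1 : Fin 2) : E2 →L[ℝ] ℝ).hasFDerivAt
  have h0 : HasFDerivAt (fun w : E2 => w 0)
      (EuclideanSpace.proj (0 : Fin 2) : E2 →L[ℝ] ℝ) w :=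
    (EuclideanSpace.proj (0 : Fin 2) : E2 →L[ℝ] ℝ).hasFDerivAt
  have h := ((hasFDerivAt_const P₃ w).add (h1.smul_const (P₁ - P₃))).add
    ((h1.mul h0).smul_const (P₂ - P₁))
  rw [zero_add] at h
  exact h

def D0 (P₁ P₂ P₃ : E2) : ℝ :=
  (P₂ - P₁) 0 * (P₁ - P₃) 1 - (P₂ - P₁) 1 * (P₁ - P₃) 0

lemma det_Lmap (w : E2) :
    (Lmap P₁ P₂ P₃ w).det = w 1 * D0 P₁ P₂ P₃ := by
  have : (Lmap P₁ P₂ P₃ w).det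
      = LinearMap.det ((Lmap P₁ P₂ P₃ w) : E2 →ₗ[ℝ] E2) := rfl
  rw [this, ← LinearMap.det_toMatrix (PiLp.basisFun 2 ℝ (Fin 2)), Matrix.det_fin_two]
  simp [LinearMap.toMatrix_apply, PiLp.basisFun_repr, PiLp.basisFun_apply, Lmap,
    PiLp.proj_apply, EuclideanSpace.single_apply, D0]
  ring

-- ### transfer between E2 and ℝ × ℝ

def mEquiv : E2 ≃ᵐ ℝ × ℝ :=
  (MeasurableEquiv.toLp 2 (Fin 2 → ℝ)).symm.trans (MeasurableEquiv.finTwoArrow)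

lemma mEquiv_symm_apply (p : ℝ × ℝ) :
    mEquiv.symm p = (WithLp.toLp 2 (![p.1, p.2] : Fin 2 → ℝ) : E2) := rfl

lemma measurePreserving_mEquiv_symm :
    MeasurePreserving (mEquiv.symm) (volume : Measure (ℝ × ℝ)) volume :=
  ((EuclideanSpace.volume_preserving_symm_measurableEquiv_toLp (Fin 2)).trans
    (volume_preserving_finTwoArrow ℝ)).symm mEquiv

def Rect : Set (ℝ × ℝ) := Ioo (0:ℝ) 1 ×ˢ Ioo (0:ℝ) 1

lemma preimage_mEquiv_symm_Sq : mEquiv.symm ⁻¹' Sq = Rect := by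
  ext p
  simp only [Set.mem_preimage, Sq, Set.mem_setOf_eq, mEquiv_symm_apply, Rect, Set.mem_prod]
  rfl

lemma setIntegral_Sq (F : E2 → ℝ) :
    ∫ w in Sq, F w = ∫ p in Rect, F (WithLp.toLp 2 (![p.1, p.2] : Fin 2 → ℝ) : E2) := by
  rw [← measurePreserving_mEquiv_symm.setIntegral_preimage_emb
    mEquiv.symm.measurableEmbedding F Sq, preimage_mEquiv_symm_Sq]
  rfl

lemma measurableSet_Sq : MeasurableSet Sq := by
  have h0 : Continuous (fun w : E2 => w 0) :=
    (EuclideanSpace.proj (0 : Fin 2) : E2 →L[ℝ] ℝ).continuous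
  have h1 : Continuous (fun w : E2 => w 1) :=
    (EuclideanSpace.proj (1 : Fin 2) : E2 →L[ℝ] ℝ).continuous
  exact ((measurableSet_Ioo.preimage h0.measurable).inter
    (measurableSet_Ioo.preimage h1.measurable))

-- ### change of variables

lemma cov_tri (hind : AffineIndependent ℝ ![P₁, P₂, P₃]) (g : E2 → ℝ) :
    ∫ x in convexHull ℝ {P₁, P₂, P₃}, g x
      = |D0 P₁ P₂ P₃| * ∫ w in Sq, (w 1) * g (Tmap P₁ P₂ P₃ w) := by
  have hK : IsCompact (convexHull ℝ ({P₁, P₂, P₃} : Set E2)) :=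
    (Set.toFinite _).isCompact_convexHull ℝ
  have hconv : Convex ℝ (convexHull ℝ ({P₁, P₂, P₃} : Set E2)) := convex_convexHull _ _
  have hae : (interior (convexHull ℝ ({P₁, P₂, P₃} : Set E2)) : Set E2)
      =ᵐ[volume] (convexHull ℝ ({P₁, P₂, P₃} : Set E2)) :=
    interior_ae_eq_of_null_frontier (hconv.addHaar_frontier (volume : Measure E2))
  rw [← setIntegral_congr_set hae, ← image_Tmap hind,
    integral_image_eq_integral_abs_det_fderiv_smul volume measurableSet_Sq
      (fun w _ => (hasFDerivAt_Tmap w).hasFDerivWithinAt) (injOn_Tmap hind) g]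
  rw [← integral_const_mul]
  refine setIntegral_congr_fun measurableSet_Sq (fun w hw => ?_)
  rw [det_Lmap]
  have hw1 : 0 < w 1 := hw.2.1
  rw [abs_mul, abs_of_pos hw1]
  simp only [smul_eq_mul]
  ring

-- ### volume identity

lemma integral_Sq_w1 : ∫ w in Sq, (w 1 : ℝ) = 1 / 2 := by
  rw [setIntegral_Sq (fun w => (w 1 : ℝ))]
  have h : ∀ p : ℝ × ℝ, (WithLp.toLp 2 (![p.1, p.2] : Fin 2 → ℝ) : E2) 1 = p.2 := fun p => rfl
  simp only [h, Matrix.cons_val_one, Matrix.cons_val_zero, Matrix.head_cons]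
  have hint : IntegrableOn (fun p : ℝ × ℝ => p.2) Rect := by
    have hcpt : IsCompact (Icc (0:ℝ) 1 ×ˢ Icc (0:ℝ) 1) := isCompact_Icc.prod isCompact_Icc
    refine ((continuous_snd.continuousOn).integrableOn_compact hcpt).mono_set ?_
    exact Set.prod_mono Set.Ioo_subset_Icc_self Set.Ioo_subset_Icc_self
  rw [Rect] at hint ⊢
  rw [Measure.volume_eq_prod] at hint ⊢
  rw [setIntegral_prod _ hint]
  have hinner : (∫ y in Ioo (0:ℝ) 1, y) = 1 / 2 := by
    rw [← integral_Ioc_eq_integral_Ioo, ← intervalIntegral.integral_of_le zero_le_one]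
    open intervalIntegral in rw [integral_id]
    norm_num
  simp only [hinner]
  rw [setIntegral_const]
  simp [Real.volume_Ioo]

lemma volume_tri (hind : AffineIndependent ℝ ![P₁, P₂, P₃]) :
    (volume (convexHull ℝ ({P₁, P₂, P₃} : Set E2))).toReal = |D0 P₁ P₂ P₃| / 2 := by
  have h := cov_tri hind (fun _ => (1:ℝ))
  simp only [mul_one] at h
  rw [integral_Sq_w1] at h
  rw [setIntegral_const] at h
  simpa [Measure.real, div_eq_mul_inv] using h

lemma K_vol_pos (hind : AffineIndependent ℝ ![P₁, P₂, P₃]) :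
    0 < (volume (convexHull ℝ ({P₁, P₂, P₃} : Set E2))).toReal := by
  have hK : IsCompact (convexHull ℝ ({P₁, P₂, P₃} : Set E2)) :=
    (Set.toFinite _).isCompact_convexHull ℝ
  have hne : (interior (convexHull ℝ ({P₁, P₂, P₃} : Set E2))).Nonempty := by
    rw [← image_Tmap hind]
    exact ⟨_, Set.mem_image_of_mem _ (⟨⟨by norm_num, by norm_num⟩, ⟨by norm_num, by norm_num⟩⟩ :
      (WithLp.toLp 2 (![1/2, 1/2] : Fin 2 → ℝ) : E2) ∈ Sq)⟩
  have h1 : 0 < volume (convexHull ℝ ({P₁, P₂, P₃} : Set E2)) :=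
    lt_of_lt_of_le (isOpen_interior.measure_pos volume hne) (measure_mono interior_subset)
  exact ENNReal.toReal_pos h1.ne' hK.measure_lt_top.ne

lemma D0_pos (hind : AffineIndependent ℝ ![P₁, P₂, P₃]) : 0 < |D0 P₁ P₂ P₃| := by
  have := K_vol_pos hind
  rw [volume_tri hind] at this
  linarith

-- ### membership

lemma Tmap_coords (t s : ℝ) :
    Tmap P₁ P₂ P₃ (WithLp.toLp 2 (![t, s] : Fin 2 → ℝ) : E2)
      = P₃ + s • (P₁ - P₃) + (s * t) • (P₂ - P₁) := by
  simp [Tmap]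

lemma mem_tri {t s : ℝ} (ht : t ∈ Icc (0:ℝ) 1) (hs : s ∈ Icc (0:ℝ) 1) :
    Tmap P₁ P₂ P₃ (WithLp.toLp 2 (![t, s] : Fin 2 → ℝ) : E2) ∈ convexHull ℝ ({P₁, P₂, P₃} : Set E2) := by
  have hP1 : P₁ ∈ convexHull ℝ ({P₁, P₂, P₃} : Set E2) :=
    subset_convexHull ℝ _ (by simp)
  have hP2 : P₂ ∈ convexHull ℝ ({P₁, P₂, P₃} : Set E2) :=
    subset_convexHull ℝ _ (by simp)
  have hP3 : P₃ ∈ convexHull ℝ ({P₁, P₂, P₃} : Set E2) :=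
    subset_convexHull ℝ _ (by simp)
  have hq : P₁ + t • (P₂ - P₁) ∈ convexHull ℝ ({P₁, P₂, P₃} : Set E2) := by
    refine (convex_convexHull ℝ _).segment_subset hP1 hP2 ⟨1 - t, t, by linarith [ht.2],
      ht.1, by ring, ?_⟩
    module
  refine (convex_convexHull ℝ _).segment_subset hP3 hq ⟨1 - s, s, by linarith [hs.2],
    hs.1, by ring, ?_⟩
  rw [Tmap_coords]
  module

-- ### the integrand G and its continuity

open scoped RealInnerProductSpace

lemma gradient_continuousOn {v : E2 → ℝ} {U : Set E2} (hU : IsOpen U)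
    (hv : ContDiffOn ℝ 1 v U) : ContinuousOn (fun x => gradient v x) U := by
  have hf := hv.continuousOn_fderiv_of_isOpen hU le_rfl
  exact (InnerProductSpace.toDual ℝ E2).symm.continuous.comp_continuousOn hf

def Gfun (v : E2 → ℝ) (P₃ : E2) (x : E2) : ℝ :=
  v x ^ 2 + v x * ⟪gradient v x, x - P₃⟫

lemma Gfun_continuousOn {v : E2 → ℝ} {U : Set E2} (P₃ : E2) (hU : IsOpen U)
    (hv : ContDiffOn ℝ 1 v U) : ContinuousOn (Gfun v P₃) U := by
  have hvc : ContinuousOn v U := hv.continuousOn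
  exact (hvc.pow 2).add (hvc.mul ((gradient_continuousOn hU hv).inner
    ((continuous_id.sub continuous_const).continuousOn)))

-- ### fundamental theorem of calculus along rays from P₃

lemma ftc_line {v : E2 → ℝ} {U : Set E2} (hU : IsOpen U)
    (hKU : convexHull ℝ ({P₁, P₂, P₃} : Set E2) ⊆ U)
    (hv : ContDiffOn ℝ 1 v U) {t : ℝ} (ht : t ∈ Icc (0:ℝ) 1) :
    v (P₁ + t • (P₂ - P₁)) ^ 2
      = ∫ s in (0:ℝ)..1, 2 * s * Gfun v P₃ (Tmap P₁ P₂ P₃ (WithLp.toLp 2 (![t, s] : Fin 2 → ℝ) : E2)) := by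
  set dvec : E2 := (P₁ - P₃) + t • (P₂ - P₁) with hdvec
  set X : ℝ → E2 := fun s => P₃ + s • dvec with hX
  have hXT : ∀ s : ℝ, X s = Tmap P₁ P₂ P₃ (WithLp.toLp 2 (![t, s] : Fin 2 → ℝ) : E2) := by
    intro s
    rw [Tmap_coords, hX, hdvec]
    module
  have hmemX : ∀ s ∈ Icc (0:ℝ) 1, X s ∈ convexHull ℝ ({P₁, P₂, P₃} : Set E2) := by
    intro s hs; rw [hXT]; exact mem_tri ht hs
  have hXc : Continuous X := continuous_const.add (continuous_id.smul continuous_const)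
  have hXd : ∀ s : ℝ, HasDerivAt X dvec s := by
    intro s
    have h := ((hasDerivAt_id s).smul_const dvec).const_add P₃
    simpa [hX] using h
  have hderiv : ∀ s ∈ Icc (0:ℝ) 1, HasDerivAt (fun s => s ^ 2 * v (X s) ^ 2)
      (2 * s * Gfun v P₃ (X s)) s := by
    intro s hs
    have hx : X s ∈ U := hKU (hmemX s hs)
    have hdiff : DifferentiableAt ℝ v (X s) :=
      (hv.contDiffAt (hU.mem_nhds hx)).differentiableAt one_ne_zero
    have hFD : HasFDerivAt v (InnerProductSpace.toDual ℝ E2 (gradient v (X s))) (X s) :=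
      hasGradientAt_iff_hasFDerivAt.mp hdiff.hasGradientAt
    have hcomp : HasDerivAt (fun s => v (X s)) ⟪gradient v (X s), dvec⟫ s := by
      have h := hFD.comp_hasDerivAt s (hXd s)
      rw [InnerProductSpace.toDual_apply_apply] at h; exact h
    have h : HasDerivAt (fun s => s ^ 2 * v (X s) ^ 2) _ s := (hasDerivAt_pow 2 s).mul (hcomp.pow 2)
    convert h using 1
    have hXsub : X s - P₃ = s • dvec := by rw [hX]; simp
    rw [Gfun, hXsub, real_inner_smul_right]
    simp only [Pi.pow_apply, Nat.cast_ofNat, Nat.add_one_sub_one, pow_one]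
    ring
  have hcont : ContinuousOn (fun s => 2 * s * Gfun v P₃ (X s)) (Set.uIcc (0:ℝ) 1) := by
    rw [Set.uIcc_of_le zero_le_one]
    refine (continuous_const.mul continuous_id).continuousOn.mul ?_
    exact (Gfun_continuousOn P₃ hU hv).comp hXc.continuousOn (fun s hs => hKU (hmemX s hs))
  have heq := intervalIntegral.integral_eq_sub_of_hasDerivAt
    (f := fun s => s ^ 2 * v (X s) ^ 2) (f' := fun s => 2 * s * Gfun v P₃ (X s))
    (fun s hs => hderiv s (by rwa [Set.uIcc_of_le zero_le_one] at hs))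
    hcont.intervalIntegrable
  have hcongr : ∀ s ∈ Set.uIcc (0:ℝ) 1,
      2 * s * Gfun v P₃ (Tmap P₁ P₂ P₃ (WithLp.toLp 2 (![t, s] : Fin 2 → ℝ) : E2))
        = 2 * s * Gfun v P₃ (X s) := fun s _ => by rw [hXT]
  rw [intervalIntegral.integral_congr hcongr, heq]
  have hX1 : X 1 = P₁ + t • (P₂ - P₁) := by rw [hX, hdvec]; module
  simp only [hX1]
  norm_num

-- ### the edge integral as an integral over the square

lemma edge_sq_eq {v : E2 → ℝ} {U : Set E2} (hU : IsOpen U)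
    (hKU : convexHull ℝ ({P₁, P₂, P₃} : Set E2) ⊆ U) (hv : ContDiffOn ℝ 1 v U) :
    ∫ t in (0:ℝ)..1, v (P₁ + t • (P₂ - P₁)) ^ 2
      = ∫ w in Sq, 2 * w 1 * Gfun v P₃ (Tmap P₁ P₂ P₃ w) := by
  have h1 : ∀ t ∈ Set.uIcc (0:ℝ) 1, v (P₁ + t • (P₂ - P₁)) ^ 2
      = ∫ s in Ioo (0:ℝ) 1, 2 * s * Gfun v P₃ (Tmap P₁ P₂ P₃ (WithLp.toLp 2 (![t, s] : Fin 2 → ℝ) : E2)) := by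
    intro t ht
    rw [Set.uIcc_of_le zero_le_one] at ht
    rw [ftc_line hU hKU hv ht, intervalIntegral.integral_of_le zero_le_one,
      integral_Ioc_eq_integral_Ioo]
  rw [intervalIntegral.integral_congr h1, intervalIntegral.integral_of_le zero_le_one,
    integral_Ioc_eq_integral_Ioo]
  have hT : Continuous (fun p : ℝ × ℝ => Tmap P₁ P₂ P₃ (WithLp.toLp 2 (![p.1, p.2] : Fin 2 → ℝ) : E2)) := by
    have heq : (fun p : ℝ × ℝ => Tmap P₁ P₂ P₃ (WithLp.toLp 2 (![p.1, p.2] : Fin 2 → ℝ) : E2))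
        = fun p : ℝ × ℝ => P₃ + p.2 • (P₁ - P₃) + (p.2 * p.1) • (P₂ - P₁) := by
      funext p; rw [Tmap_coords]
    rw [heq]
    exact (continuous_const.add (continuous_snd.smul continuous_const)).add
      ((continuous_snd.mul continuous_fst).smul continuous_const)
  have hfc : ContinuousOn
      (fun p : ℝ × ℝ => 2 * p.2 * Gfun v P₃ (Tmap P₁ P₂ P₃ (WithLp.toLp 2 (![p.1, p.2] : Fin 2 → ℝ) : E2)))
      (Icc (0:ℝ) 1 ×ˢ Icc (0:ℝ) 1) := by
    refine (continuous_const.mul continuous_snd).continuousOn.mul ?_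
    exact (Gfun_continuousOn P₃ hU hv).comp hT.continuousOn
      (fun p hp => hKU (mem_tri hp.1 hp.2))
  have hfint : IntegrableOn
      (fun p : ℝ × ℝ => 2 * p.2 * Gfun v P₃ (Tmap P₁ P₂ P₃ (WithLp.toLp 2 (![p.1, p.2] : Fin 2 → ℝ) : E2)))
      (Ioo (0:ℝ) 1 ×ˢ Ioo (0:ℝ) 1) :=
    (hfc.integrableOn_compact (isCompact_Icc.prod isCompact_Icc)).mono_set
      (Set.prod_mono Set.Ioo_subset_Icc_self Set.Ioo_subset_Icc_self)
  rw [setIntegral_Sq (fun w => 2 * w 1 * Gfun v P₃ (Tmap P₁ P₂ P₃ w)), Rect]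
  rw [Measure.volume_eq_prod] at hfint ⊢
  simp only [Matrix.cons_val_one, Matrix.head_cons, Matrix.cons_val_zero]
  rw [setIntegral_prod _ hfint]

-- ### L² Cauchy-Schwarz on a compact set

lemma l2_cs {K : Set E2} (hKm : MeasurableSet K) (hKc : IsCompact K)
    {f g : E2 → ℝ} (hf : ContinuousOn f K) (hg : ContinuousOn g K)
    (hfn : ∀ x ∈ K, 0 ≤ f x) (hgn : ∀ x ∈ K, 0 ≤ g x) :
    ∫ x in K, f x * g x
      ≤ Real.sqrt (∫ x in K, f x ^ 2) * Real.sqrt (∫ x in K, g x ^ 2) := by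
  haveI : IsFiniteMeasure (volume.restrict K) :=
    ⟨by rw [Measure.restrict_apply_univ]; exact hKc.measure_lt_top⟩
  have hpq : Real.HolderConjugate 2 2 := Real.HolderConjugate.two_two
  obtain ⟨Cf, hCf⟩ := hKc.exists_bound_of_continuousOn hf
  obtain ⟨Cg, hCg⟩ := hKc.exists_bound_of_continuousOn hg
  have hfm : AEStronglyMeasurable f (volume.restrict K) := hf.aestronglyMeasurable hKm
  have hgm : AEStronglyMeasurable g (volume.restrict K) := hg.aestronglyMeasurable hKm
  have hfLp : MemLp f (ENNReal.ofReal 2) (volume.restrict K) :=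
    MemLp.of_bound hfm Cf ((ae_restrict_iff' hKm).2 (Filter.Eventually.of_forall hCf))
  have hgLp : MemLp g (ENNReal.ofReal 2) (volume.restrict K) :=
    MemLp.of_bound hgm Cg ((ae_restrict_iff' hKm).2 (Filter.Eventually.of_forall hCg))
  have h := integral_mul_le_Lp_mul_Lq_of_nonneg hpq
    ((ae_restrict_iff' hKm).2 (Filter.Eventually.of_forall hfn))
    ((ae_restrict_iff' hKm).2 (Filter.Eventually.of_forall hgn)) hfLp hgLp
  have hconv : ∀ y : ℝ, y ^ (2:ℝ) = y ^ (2:ℕ) := fun y => by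
    rw [← Real.rpow_natCast y 2]; norm_num
  simp only [hconv] at h
  rw [Real.sqrt_eq_rpow, Real.sqrt_eq_rpow]
  exact h

-- ### gradient of u - c

lemma gradient_sub_const (u : E2 → ℝ) (c : ℝ) (x : E2) :
    gradient (fun y => u y - c) x = gradient u x := by
  unfold gradient
  rw [fderiv_sub_const]

set_option maxHeartbeats 1000000 in
/-- Conditional trace estimate (final step in the proof of Theorem 4.1): if `u` has
mean zero on the edge `e = [P₁, P₂]` of the triangle `K` and satisfies a
Poincaré-type bound `‖u − c‖_{L²(K)} ≤ γ ‖∇u‖_{L²(K)}` for some constant `c` and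
`γ ≥ 0`, then `∫_e u² ds ≤ (|e|/|K|)(γ² + h_K γ) ∫_K |∇u|²`. -/
theorem conditional_trace_estimate
    (P₁ P₂ P₃ : EuclideanSpace ℝ (Fin 2))
    (hind : AffineIndependent ℝ ![P₁, P₂, P₃])
    (u : EuclideanSpace ℝ (Fin 2) → ℝ)
    (U : Set (EuclideanSpace ℝ (Fin 2))) (hU : IsOpen U)
    (hKU : convexHull ℝ {P₁, P₂, P₃} ⊆ U)
    (hu : ContDiffOn ℝ 1 u U)
    (hmean : (∫ t in (0:ℝ)..1, u (P₁ + t • (P₂ - P₁)) * dist P₁ P₂) = 0)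
    (c γ : ℝ) (hγ : 0 ≤ γ)
    (hpoincare : Real.sqrt (∫ x in convexHull ℝ {P₁, P₂, P₃}, (u x - c) ^ 2)
        ≤ γ * Real.sqrt (∫ x in convexHull ℝ {P₁, P₂, P₃}, ‖gradient u x‖ ^ 2)) :
    (∫ t in (0:ℝ)..1, u (P₁ + t • (P₂ - P₁)) ^ 2 * dist P₁ P₂)
      ≤ (dist P₁ P₂ / (volume (convexHull ℝ {P₁, P₂, P₃})).toReal)
          * (γ ^ 2
              + Metric.diam (convexHull ℝ ({P₁, P₂, P₃} : Set (EuclideanSpace ℝ (Fin 2)))) * γ)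
          * ∫ x in convexHull ℝ {P₁, P₂, P₃}, ‖gradient u x‖ ^ 2 := by
  have hKc : IsCompact (convexHull ℝ ({P₁, P₂, P₃} : Set E2)) :=
    (Set.toFinite _).isCompact_convexHull ℝ
  have hKm : MeasurableSet (convexHull ℝ ({P₁, P₂, P₃} : Set E2)) :=
    hKc.isClosed.measurableSet
  have hD0 := D0_pos hind
  have hvol := volume_tri hind
  have hvolpos := K_vol_pos hind
  have hP12 : P₁ ≠ P₂ := by
    intro h
    have h01 : (0 : Fin 3) = 1 := hind.injective (by simpa using h)
    simp at h01
  have he : 0 < dist P₁ P₂ := dist_pos.2 hP12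
  set v : E2 → ℝ := fun x => u x - c with hvdef
  have hvC : ContDiffOn ℝ 1 v U := hu.sub contDiffOn_const
  have hgradv : ∀ x : E2, gradient v x = gradient u x := fun x => gradient_sub_const u c x
  have hvx : ∀ x : E2, u x - c = v x := fun _ => rfl
  simp only [hvx] at hpoincare
  -- continuity facts
  have hq : Continuous (fun t : ℝ => P₁ + t • (P₂ - P₁)) :=
    continuous_const.add (continuous_id.smul continuous_const)
  have hmemq : ∀ t ∈ Set.uIcc (0:ℝ) 1,
      (P₁ + t • (P₂ - P₁)) ∈ convexHull ℝ ({P₁, P₂, P₃} : Set E2) := by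
    intro t ht
    rw [Set.uIcc_of_le zero_le_one] at ht
    have h1 : Tmap P₁ P₂ P₃ (WithLp.toLp 2 (![t, 1] : Fin 2 → ℝ) : E2) = P₁ + t • (P₂ - P₁) := by
      rw [Tmap_coords]; module
    rw [← h1]
    exact mem_tri ht (Set.mem_Icc.2 ⟨zero_le_one, le_refl 1⟩)
  have huq : ContinuousOn (fun t => u (P₁ + t • (P₂ - P₁))) (Set.uIcc (0:ℝ) 1) :=
    (hu.continuousOn).comp hq.continuousOn (fun t ht => hKU (hmemq t ht))
  have hintuq : IntervalIntegrable (fun t => u (P₁ + t • (P₂ - P₁))) volume 0 1 :=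
    huq.intervalIntegrable
  -- mean zero
  have hmean0 : (∫ t in (0:ℝ)..1, u (P₁ + t • (P₂ - P₁))) = 0 := by
    rw [intervalIntegral.integral_mul_const] at hmean
    rcases mul_eq_zero.mp hmean with h | h
    exacts [h, absurd h (ne_of_gt he)]
  -- compare with v
  have hsq : (∫ t in (0:ℝ)..1, u (P₁ + t • (P₂ - P₁)) ^ 2)
      ≤ ∫ t in (0:ℝ)..1, v (P₁ + t • (P₂ - P₁)) ^ 2 := by
    have hexp : ∀ t : ℝ, v (P₁ + t • (P₂ - P₁)) ^ 2
        = u (P₁ + t • (P₂ - P₁)) ^ 2 + ((-2*c) * u (P₁ + t • (P₂ - P₁)) + c^2) := by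
      intro t; simp only [hvdef]; ring
    have hu2 : IntervalIntegrable (fun t => u (P₁ + t • (P₂ - P₁)) ^ 2) volume 0 1 :=
      (huq.pow 2).intervalIntegrable
    have hlin : IntervalIntegrable
        (fun t => (-2*c) * u (P₁ + t • (P₂ - P₁)) + c^2) volume 0 1 :=
      (hintuq.const_mul _).add intervalIntegrable_const
    have hsplit : (∫ t in (0:ℝ)..1, v (P₁ + t • (P₂ - P₁)) ^ 2)
        = (∫ t in (0:ℝ)..1, u (P₁ + t • (P₂ - P₁)) ^ 2)
          + ∫ t in (0:ℝ)..1, ((-2*c) * u (P₁ + t • (P₂ - P₁)) + c^2) := by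
      rw [← intervalIntegral.integral_add hu2 hlin]
      exact intervalIntegral.integral_congr (fun t _ => hexp t)
    have hlin0 : (∫ t in (0:ℝ)..1, ((-2*c) * u (P₁ + t • (P₂ - P₁)) + c^2)) = c^2 := by
      rw [intervalIntegral.integral_add (hintuq.const_mul _) intervalIntegrable_const,
        intervalIntegral.integral_const_mul, hmean0]
      simp
    rw [hsplit, hlin0]
    nlinarith [sq_nonneg c]
  -- main identity
  have hmain := edge_sq_eq (P₁ := P₁) (P₂ := P₂) (P₃ := P₃) hU hKU hvC
  have hcov := cov_tri hind (Gfun v P₃)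
  have hSqG : (∫ w in Sq, 2 * w 1 * Gfun v P₃ (Tmap P₁ P₂ P₃ w))
      = 2 * ∫ w in Sq, w 1 * Gfun v P₃ (Tmap P₁ P₂ P₃ w) := by
    simp_rw [mul_assoc]
    exact integral_const_mul 2 _
  have hedge : (∫ t in (0:ℝ)..1, v (P₁ + t • (P₂ - P₁)) ^ 2)
      = (2 / |D0 P₁ P₂ P₃|) * ∫ x in convexHull ℝ ({P₁, P₂, P₃} : Set E2), Gfun v P₃ x := by
    rw [hmain, hSqG, hcov]
    field_simp
  -- bound the K-integral
  have hvKc : ContinuousOn v (convexHull ℝ ({P₁, P₂, P₃} : Set E2)) :=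
    hvC.continuousOn.mono hKU
  have hgradKc : ContinuousOn (fun x => gradient v x)
      (convexHull ℝ ({P₁, P₂, P₃} : Set E2)) :=
    (gradient_continuousOn hU hvC).mono hKU
  have hinnerKc : ContinuousOn (fun x => ⟪gradient v x, x - P₃⟫)
      (convexHull ℝ ({P₁, P₂, P₃} : Set E2)) :=
    hgradKc.inner ((continuous_id.sub continuous_const).continuousOn)
  have hint1 : IntegrableOn (fun x => v x ^ 2) (convexHull ℝ ({P₁, P₂, P₃} : Set E2)) :=
    (hvKc.pow 2).integrableOn_compact hKc
  have hint2 : IntegrableOn (fun x => v x * ⟪gradient v x, x - P₃⟫)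
      (convexHull ℝ ({P₁, P₂, P₃} : Set E2)) :=
    (hvKc.mul hinnerKc).integrableOn_compact hKc
  have hGsplit : (∫ x in convexHull ℝ ({P₁, P₂, P₃} : Set E2), Gfun v P₃ x)
      = (∫ x in convexHull ℝ ({P₁, P₂, P₃} : Set E2), v x ^ 2)
        + ∫ x in convexHull ℝ ({P₁, P₂, P₃} : Set E2), v x * ⟪gradient v x, x - P₃⟫ := by
    rw [← integral_add hint1 hint2]
    rfl
  set hdiam := Metric.diam (convexHull ℝ ({P₁, P₂, P₃} : Set E2)) with hdiamdef
  have hh0 : 0 ≤ hdiam := Metric.diam_nonneg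
  have hP3K : P₃ ∈ convexHull ℝ ({P₁, P₂, P₃} : Set E2) := subset_convexHull ℝ _ (by simp)
  have hpt : ∀ x ∈ convexHull ℝ ({P₁, P₂, P₃} : Set E2),
      v x * ⟪gradient v x, x - P₃⟫ ≤ |v x| * (hdiam * ‖gradient v x‖) := by
    intro x hx
    have h1 : v x * ⟪gradient v x, x - P₃⟫ ≤ |v x| * |⟪gradient v x, x - P₃⟫| := by
      rw [← abs_mul]; exact le_abs_self _
    have h2 : |⟪gradient v x, x - P₃⟫| ≤ ‖gradient v x‖ * ‖x - P₃‖ :=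
      abs_real_inner_le_norm _ _
    have h3 : ‖x - P₃‖ ≤ hdiam := by
      rw [← dist_eq_norm]
      exact Metric.dist_le_diam_of_mem hKc.isBounded hx hP3K
    have h4 : |⟪gradient v x, x - P₃⟫| ≤ hdiam * ‖gradient v x‖ := by
      nlinarith [norm_nonneg (gradient v x), norm_nonneg (x - P₃)]
    nlinarith [abs_nonneg (v x)]
  have hintb : IntegrableOn (fun x => |v x| * (hdiam * ‖gradient v x‖))
      (convexHull ℝ ({P₁, P₂, P₃} : Set E2)) :=
    (hvKc.abs.mul (continuousOn_const.mul hgradKc.norm)).integrableOn_compact hKc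
  have hb2 : (∫ x in convexHull ℝ ({P₁, P₂, P₃} : Set E2), v x * ⟪gradient v x, x - P₃⟫)
      ≤ ∫ x in convexHull ℝ ({P₁, P₂, P₃} : Set E2), |v x| * (hdiam * ‖gradient v x‖) :=
    setIntegral_mono_on hint2 hintb hKm hpt
  have hfact : (∫ x in convexHull ℝ ({P₁, P₂, P₃} : Set E2), |v x| * (hdiam * ‖gradient v x‖))
      = hdiam * ∫ x in convexHull ℝ ({P₁, P₂, P₃} : Set E2), |v x| * ‖gradient v x‖ := by
    simp_rw [show ∀ x : E2, |v x| * (hdiam * ‖gradient v x‖)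
      = hdiam * (|v x| * ‖gradient v x‖) from fun x => by ring]
    exact integral_const_mul hdiam _
  have hcs := l2_cs hKm hKc hvKc.abs hgradKc.norm
    (fun x _ => abs_nonneg _) (fun x _ => norm_nonneg _)
  simp only [sq_abs] at hcs
  -- notation
  set A := ∫ x in convexHull ℝ ({P₁, P₂, P₃} : Set E2), v x ^ 2 with hAdef
  set B := ∫ x in convexHull ℝ ({P₁, P₂, P₃} : Set E2), ‖gradient u x‖ ^ 2 with hBdef
  have hACS : (∫ x in convexHull ℝ ({P₁, P₂, P₃} : Set E2), ‖gradient v x‖ ^ 2) = B := by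
    rw [hBdef]
    exact setIntegral_congr_fun hKm (fun x _ => by rw [hgradv])
  rw [hACS] at hcs
  have hA0 : 0 ≤ A := setIntegral_nonneg hKm (fun x _ => sq_nonneg _)
  have hB0 : 0 ≤ B := setIntegral_nonneg hKm (fun x _ => sq_nonneg _)
  have hSA2 : Real.sqrt A ^ 2 = A := Real.sq_sqrt hA0
  have hSB2 : Real.sqrt B ^ 2 = B := Real.sq_sqrt hB0
  have hSA0 : 0 ≤ Real.sqrt A := Real.sqrt_nonneg _
  have hSB0 : 0 ≤ Real.sqrt B := Real.sqrt_nonneg _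
  have hpoin : Real.sqrt A ≤ γ * Real.sqrt B := hpoincare
  -- the K-integral bound
  have hGbound : (∫ x in convexHull ℝ ({P₁, P₂, P₃} : Set E2), Gfun v P₃ x)
      ≤ (γ ^ 2 + hdiam * γ) * B := by
    have hmid : (∫ x in convexHull ℝ ({P₁, P₂, P₃} : Set E2), Gfun v P₃ x)
        ≤ A + hdiam * (Real.sqrt A * Real.sqrt B) := by
      rw [hGsplit]
      have := le_trans hb2 (le_of_eq hfact)
      have h2 := mul_le_mul_of_nonneg_left hcs hh0
      linarith
    have h3 : A ≤ γ ^ 2 * B := by nlinarith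
    have h4 : hdiam * (Real.sqrt A * Real.sqrt B) ≤ hdiam * (γ * B) := by
      have h5 : Real.sqrt A * Real.sqrt B ≤ (γ * Real.sqrt B) * Real.sqrt B :=
        mul_le_mul_of_nonneg_right hpoin hSB0
      have h6 : γ * (Real.sqrt B * Real.sqrt B) = γ * B := by
        rw [Real.mul_self_sqrt hB0]
      have h7 : Real.sqrt A * Real.sqrt B ≤ γ * B := by linarith [h5, h6]
      exact mul_le_mul_of_nonneg_left h7 hh0
    nlinarith
  -- finish
  rw [intervalIntegral.integral_mul_const]
  have hLHS : (∫ t in (0:ℝ)..1, u (P₁ + t • (P₂ - P₁)) ^ 2)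
      ≤ (2 / |D0 P₁ P₂ P₃|) * ((γ ^ 2 + hdiam * γ) * B) := by
    refine le_trans hsq ?_
    rw [hedge]
    exact mul_le_mul_of_nonneg_left hGbound (by positivity)
  have hvolK : (volume (convexHull ℝ ({P₁, P₂, P₃} : Set E2))).toReal
      = |D0 P₁ P₂ P₃| / 2 := hvol
  rw [hvolK]
  have hfinal := mul_le_mul_of_nonneg_right hLHS (le_of_lt he)
  calc (∫ t in (0:ℝ)..1, u (P₁ + t • (P₂ - P₁)) ^ 2) * dist P₁ P₂
      ≤ (2 / |D0 P₁ P₂ P₃|) * ((γ ^ 2 + hdiam * γ) * B) * dist P₁ P₂ := hfinal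
    _ = dist P₁ P₂ / (|D0 P₁ P₂ P₃| / 2) * (γ ^ 2 + hdiam * γ) * B := by
        field_simp
end
end
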